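/- Let N be a positive integer and let λ_φ, λ_ψ, b, c, t_φ, n_φ be integers satisfying λ_ψ ≡ c·λ_φ + b (mod N), λ_φ² - t_φ·λ_φ + n_φ ≡ 0 (mod N), and λ_ψ² ≡ -1 (mod N). Set b₁ := (1, 0, b, c), b₂ := (0, 1, -c·n_φ, c·t_φ + b), b₃ := (-b, -c, 1, 0), b₄ := (c·n_φ, -c·t_φ - b, 0, 1), and let L := {(z₁, z₂, z₃, z₄) ∈ ℤ⁴ : z₁ + z₂·λ_φ + z₃·λ_ψ + z₄·λ_φ·λ_ψ ≡ 0 (mod N)}. Then: (i) b₁, b₂, b₃, b₄ all lie in L; (ii) if N equals the absolute value of the determinant of the 4×4 integer matrix with rows b₁, b₂, b₃, b₄, then L equals the ℤ-span of {b₁, b₂, b₃, b₄}. -/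

import Mathlib

/-- The lattice L = {(z₁, z₂, z₃, z₄) ∈ ℤ⁴ : z₁ + z₂·λ_φ + z₃·λ_ψ + z₄·λ_φ·λ_ψ ≡ 0 (mod N)}
of 4-dimensional decompositions of 0. -/
def decompLattice4 (N : ℕ) (lφ lψ : ℤ) : Submodule ℤ (Fin 4 → ℤ) where
  carrier := {z | ((z 0 + z 1 * lφ + z 2 * lψ + z 3 * (lφ * lψ) : ℤ) : ZMod N) = 0}
  zero_mem' := by simp
  add_mem' := by
    intro a b ha hb
    simp only [Set.mem_setOf_eq, Pi.add_apply] at ha hb ⊢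
    push_cast at ha hb ⊢
    linear_combination ha + hb
  smul_mem' := by
    intro m a ha
    simp only [Set.mem_setOf_eq, Pi.smul_apply, smul_eq_mul] at ha ⊢
    push_cast at ha ⊢
    linear_combination (m : ZMod N) * ha

lemma mem_decompLattice4 {N : ℕ} {lφ lψ : ℤ} {z : Fin 4 → ℤ} :
    z ∈ decompLattice4 N lφ lψ ↔
      ((z 0 + z 1 * lφ + z 2 * lψ + z 3 * (lφ * lψ) : ℤ) : ZMod N) = 0 := Iff.rfl

/-- The GLV+GLS (Longa–Sica) four-dimensional basis: if λ_ψ ≡ c·λ_φ + b,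
λ_φ² - t_φ·λ_φ + n_φ ≡ 0, and λ_ψ² ≡ -1 (mod N), then the four vectors
b₁ = (1,0,b,c), b₂ = (0,1,-c·n_φ, c·t_φ+b), b₃ = (-b,-c,1,0),
b₄ = (c·n_φ, -c·t_φ-b, 0, 1) lie in L; and if N equals the absolute value of
the determinant of the matrix with rows b₁,…,b₄, then they span L. -/
theorem glv_gls_four_dimensional_basis
    (N : ℕ) (hN : 0 < N) (lφ lψ b c tφ nφ : ℤ)
    (h1 : ((lψ : ℤ) : ZMod N) = ((c * lφ + b : ℤ) : ZMod N))
    (h2 : ((lφ ^ 2 - tφ * lφ + nφ : ℤ) : ZMod N) = 0)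
    (h3 : ((lψ ^ 2 : ℤ) : ZMod N) = ((-1 : ℤ) : ZMod N)) :
    (![1, 0, b, c] ∈ decompLattice4 N lφ lψ ∧
      ![0, 1, -(c * nφ), c * tφ + b] ∈ decompLattice4 N lφ lψ ∧
      ![-b, -c, 1, 0] ∈ decompLattice4 N lφ lψ ∧
      ![c * nφ, -(c * tφ) - b, 0, 1] ∈ decompLattice4 N lφ lψ) ∧
    (N = ((!![1, 0, b, c;
              0, 1, -(c * nφ), c * tφ + b;
              -b, -c, 1, 0;
              c * nφ, -(c * tφ) - b, 0, 1] : Matrix (Fin 4) (Fin 4) ℤ).det).natAbs →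
      Submodule.span ℤ
          ({![1, 0, b, c], ![0, 1, -(c * nφ), c * tφ + b],
            ![-b, -c, 1, 0], ![c * nφ, -(c * tφ) - b, 0, 1]} : Set (Fin 4 → ℤ))
        = decompLattice4 N lφ lψ) := by
  have h1' : (lψ : ZMod N) = (c : ZMod N) * lφ + b := by push_cast at h1; exact h1
  have h2' : (lφ : ZMod N) ^ 2 - tφ * lφ + nφ = 0 := by push_cast at h2; exact h2
  have h3' : (lψ : ZMod N) ^ 2 = -1 := by push_cast at h3; exact h3
  have m1 : ![1, 0, b, c] ∈ decompLattice4 N lφ lψ := by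
    rw [mem_decompLattice4]
    simp only [Matrix.cons_val_zero, Matrix.cons_val_one, Matrix.head_cons,
      Matrix.cons_val_two, Matrix.tail_cons, Matrix.cons_val_three]
    push_cast
    linear_combination (-(lψ : ZMod N)) * h1' + h3'
  have m2 : ![0, 1, -(c * nφ), c * tφ + b] ∈ decompLattice4 N lφ lψ := by
    rw [mem_decompLattice4]
    simp only [Matrix.cons_val_zero, Matrix.cons_val_one, Matrix.head_cons,
      Matrix.cons_val_two, Matrix.tail_cons, Matrix.cons_val_three]
    push_cast
    linear_combination (lφ : ZMod N) * h3' - (c : ZMod N) * lψ * h2' - (lφ : ZMod N) * lψ * h1'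
  have m3 : ![-b, -c, 1, 0] ∈ decompLattice4 N lφ lψ := by
    rw [mem_decompLattice4]
    simp only [Matrix.cons_val_zero, Matrix.cons_val_one, Matrix.head_cons,
      Matrix.cons_val_two, Matrix.tail_cons, Matrix.cons_val_three]
    push_cast
    linear_combination h1'
  have m4 : ![c * nφ, -(c * tφ) - b, 0, 1] ∈ decompLattice4 N lφ lψ := by
    rw [mem_decompLattice4]
    simp only [Matrix.cons_val_zero, Matrix.cons_val_one, Matrix.head_cons,
      Matrix.cons_val_two, Matrix.tail_cons, Matrix.cons_val_three]
    push_cast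
    linear_combination (lφ : ZMod N) * h1' + (c : ZMod N) * h2'
  refine ⟨⟨m1, m2, m3, m4⟩, ?_⟩
  intro hdet
  set D : ℤ := (!![1, 0, b, c;
              0, 1, -(c * nφ), c * tφ + b;
              -b, -c, 1, 0;
              c * nφ, -(c * tφ) - b, 0, 1] : Matrix (Fin 4) (Fin 4) ℤ).det with hD
  have hPQ : (1 + b ^ 2 - c ^ 2 * nφ) * (1 - c ^ 2 * nφ + (c * tφ + b) ^ 2) - (2 * b * c + c ^ 2 * tφ) * (-(c * nφ) * (2 * b + c * tφ)) = D := by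
    rw [hD]
    simp [Matrix.det_succ_row_zero, Fin.sum_univ_succ, Fin.succAbove, Fin.castSucc, Fin.castAdd,
      Fin.castLE, Matrix.det_fin_three]
    ring
  have hD0 : D ≠ 0 := by
    intro h
    rw [h] at hdet
    simp at hdet
    omega
  have hNdvd : ∀ x : ℤ, (N : ℤ) ∣ x → D ∣ x := by
    intro x hx
    rwa [hdet, Int.natAbs_dvd] at hx
  have hp : (N : ℤ) ∣ ((1 + b ^ 2 - c ^ 2 * nφ) + (2 * b * c + c ^ 2 * tφ) * lφ) := by
    rw [← ZMod.intCast_zmod_eq_zero_iff_dvd]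
    push_cast
    linear_combination h3' - ((lψ : ZMod N) + b + c * lφ) * h1' - (c : ZMod N) ^ 2 * h2'
  have hq : (N : ℤ) ∣ ((-(c * nφ) * (2 * b + c * tφ)) + (1 - c ^ 2 * nφ + (c * tφ + b) ^ 2) * lφ) := by
    rw [← ZMod.intCast_zmod_eq_zero_iff_dvd]
    push_cast
    linear_combination (lφ : ZMod N) * h3' - (lφ : ZMod N) * ((lψ : ZMod N) + b + c * lφ) * h1'
      + (-(2 : ZMod N) * b * c - c ^ 2 * tφ - c ^ 2 * lφ) * h2'
  apply le_antisymm
  · rw [Submodule.span_le]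
    rintro x hx
    simp only [Set.mem_insert_iff, Set.mem_singleton_iff] at hx
    rcases hx with rfl | rfl | rfl | rfl
    exacts [m1, m2, m3, m4]
  · intro z hz
    rw [mem_decompLattice4] at hz
    push_cast at hz
    have huv : (N : ℤ) ∣ ((z 2 - z 0 * b + z 1 * (c * nφ)) + (z 3 - z 0 * c - z 1 * (c * tφ + b)) * lφ) := by
      rw [← ZMod.intCast_zmod_eq_zero_iff_dvd]
      push_cast
      linear_combination (-(lψ : ZMod N)) * hz + ((z 2 : ZMod N) + z 3 * lφ) * h3'
        + ((z 0 : ZMod N) + z 1 * lφ) * h1' + (z 1 : ZMod N) * c * h2'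
    have hd1 : D ∣ ((z 2 - z 0 * b + z 1 * (c * nφ)) * (1 - c ^ 2 * nφ + (c * tφ + b) ^ 2) - (z 3 - z 0 * c - z 1 * (c * tφ + b)) * (-(c * nφ) * (2 * b + c * tφ))) := by
      have h : (z 2 - z 0 * b + z 1 * (c * nφ)) * (1 - c ^ 2 * nφ + (c * tφ + b) ^ 2) - (z 3 - z 0 * c - z 1 * (c * tφ + b)) * (-(c * nφ) * (2 * b + c * tφ))
          = (1 - c ^ 2 * nφ + (c * tφ + b) ^ 2) * ((z 2 - z 0 * b + z 1 * (c * nφ)) + (z 3 - z 0 * c - z 1 * (c * tφ + b)) * lφ) - (z 3 - z 0 * c - z 1 * (c * tφ + b)) * ((-(c * nφ) * (2 * b + c * tφ)) + (1 - c ^ 2 * nφ + (c * tφ + b) ^ 2) * lφ) := by ring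
      rw [h]
      exact hNdvd _ (dvd_sub (Dvd.dvd.mul_left huv _) (Dvd.dvd.mul_left hq _))
    have hd2 : D ∣ ((z 3 - z 0 * c - z 1 * (c * tφ + b)) * (1 + b ^ 2 - c ^ 2 * nφ) - (z 2 - z 0 * b + z 1 * (c * nφ)) * (2 * b * c + c ^ 2 * tφ)) := by
      have h : (z 3 - z 0 * c - z 1 * (c * tφ + b)) * (1 + b ^ 2 - c ^ 2 * nφ) - (z 2 - z 0 * b + z 1 * (c * nφ)) * (2 * b * c + c ^ 2 * tφ)
          = (z 3 - z 0 * c - z 1 * (c * tφ + b)) * ((1 + b ^ 2 - c ^ 2 * nφ) + (2 * b * c + c ^ 2 * tφ) * lφ) - (2 * b * c + c ^ 2 * tφ) * ((z 2 - z 0 * b + z 1 * (c * nφ)) + (z 3 - z 0 * c - z 1 * (c * tφ + b)) * lφ) := by ring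
      rw [h]
      exact hNdvd _ (dvd_sub (Dvd.dvd.mul_left hp _) (Dvd.dvd.mul_left huv _))
    obtain ⟨s, hs⟩ := hd1
    obtain ⟨t, ht⟩ := hd2
    have hsu : s * (1 + b ^ 2 - c ^ 2 * nφ) + t * (-(c * nφ) * (2 * b + c * tφ)) = (z 2 - z 0 * b + z 1 * (c * nφ)) :=
      mul_left_cancel₀ hD0 (by linear_combination (-(1 + b ^ 2 - c ^ 2 * nφ)) * hs - (-(c * nφ) * (2 * b + c * tφ)) * ht + (z 2 - z 0 * b + z 1 * (c * nφ)) * hPQ)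
    have hsv : s * (2 * b * c + c ^ 2 * tφ) + t * (1 - c ^ 2 * nφ + (c * tφ + b) ^ 2) = (z 3 - z 0 * c - z 1 * (c * tφ + b)) :=
      mul_left_cancel₀ hD0 (by linear_combination (-(2 * b * c + c ^ 2 * tφ)) * hs - (1 - c ^ 2 * nφ + (c * tφ + b) ^ 2) * ht + (z 3 - z 0 * c - z 1 * (c * tφ + b)) * hPQ)
    have hzeq : z = (z 0 + s * b - t * (c * nφ)) • ![1, 0, b, c]
        + (z 1 + s * c + t * (c * tφ + b)) • ![0, 1, -(c * nφ), c * tφ + b]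
        + s • ![-b, -c, 1, 0] + t • ![c * nφ, -(c * tφ) - b, 0, 1] := by
      funext i
      fin_cases i
      · show z 0 = (z 0 + s * b - t * (c * nφ)) * 1 + (z 1 + s * c + t * (c * tφ + b)) * 0
          + s * (-b) + t * (c * nφ)
        ring
      · show z 1 = (z 0 + s * b - t * (c * nφ)) * 0 + (z 1 + s * c + t * (c * tφ + b)) * 1
          + s * (-c) + t * (-(c * tφ) - b)
        ring
      · show z 2 = (z 0 + s * b - t * (c * nφ)) * b
          + (z 1 + s * c + t * (c * tφ + b)) * (-(c * nφ)) + s * 1 + t * 0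
        linear_combination -hsu
      · show z 3 = (z 0 + s * b - t * (c * nφ)) * c
          + (z 1 + s * c + t * (c * tφ + b)) * (c * tφ + b) + s * 0 + t * 1
        linear_combination -hsv
    rw [hzeq]
    refine add_mem (add_mem (add_mem
      (Submodule.smul_mem _ _ (Submodule.subset_span ?_))
      (Submodule.smul_mem _ _ (Submodule.subset_span ?_)))
      (Submodule.smul_mem _ _ (Submodule.subset_span ?_)))
      (Submodule.smul_mem _ _ (Submodule.subset_span ?_))
    · simp only [Set.mem_insert_iff, Set.mem_singleton_iff]; tauto
    · simp only [Set.mem_insert_iff, Set.mem_singleton_iff]; tauto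
    · simp only [Set.mem_insert_iff, Set.mem_singleton_iff]; tauto
    · simp only [Set.mem_insert_iff, Set.mem_singleton_iff]; tauto
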